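/- Let D be a 2n-sided polygon with sides alternately labeled X and Y, and let Γ be a collection of pairwise disjoint, pairwise non-parallel diagonals of D. Then some X-labeled side of D meets at most eight diagonals of Γ. -/

import Mathlib

open Finset

/-- A family of pairwise non-crossing, distinct chords on `m` points has at most
`2 * m` members. Proof: injection `φ` sending each chord `(a,b)` either to
`(a, false)` (if `b` is the least right-partner of `a`) or to `(v, true)` where
`v` is the largest right-partner of `a` below `b`. -/
lemma noncross_card_le (m : ℕ) (Γ : Finset (ℕ × ℕ))
    (hmem : ∀ p ∈ Γ, p.1 < p.2 ∧ p.2 < m)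
    (hnoncross : ∀ p ∈ Γ, ∀ q ∈ Γ, p ≠ q →
      ¬(p.1 < q.1 ∧ q.1 < p.2 ∧ p.2 < q.2) ∧
      ¬(q.1 < p.1 ∧ p.1 < q.2 ∧ q.2 < p.2)) :
    Γ.card ≤ 2 * m := by
  classical
  set B : ℕ × ℕ → Finset ℕ :=
    fun p => (Γ.filter (fun q => q.1 = p.1 ∧ q.2 < p.2)).image Prod.snd with hB
  set φ : ℕ × ℕ → ℕ × Bool := fun p =>
    if h : (B p).Nonempty then ((B p).max' h, true) else (p.1, false) with hφ
  -- facts about membership in B p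
  have hBmem : ∀ p, ∀ b ∈ B p, (p.1, b) ∈ Γ ∧ b < p.2 := by
    intro p b hb
    simp only [hB, mem_image, mem_filter] at hb
    obtain ⟨q, ⟨hqΓ, hq1, hq2⟩, rfl⟩ := hb
    constructor
    · rwa [← hq1, Prod.mk.eta]
    · exact hq2
  have hBmem' : ∀ p q, q ∈ Γ → q.1 = p.1 → q.2 < p.2 → q.2 ∈ B p := by
    intro p q hq h1 h2
    simp only [hB, mem_image, mem_filter]
    exact ⟨q, ⟨hq, h1, h2⟩, rfl⟩
  have key : Γ.card ≤ ((Finset.range m) ×ˢ (Finset.univ : Finset Bool)).card := by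
    apply Finset.card_le_card_of_injOn φ
    · -- maps into
      intro p hp
      simp only [hφ]
      split_ifs with h
      · obtain ⟨hin, hlt⟩ := hBmem p ((B p).max' h) ((B p).max'_mem h)
        have := (hmem _ hin).2
        simp only [coe_product, Set.mem_prod, coe_range, coe_univ, Set.mem_univ, Set.mem_Iio, mem_product, mem_range, mem_univ, and_true]
        exact this
      · simp only [coe_product, Set.mem_prod, coe_range, coe_univ, Set.mem_univ, Set.mem_Iio, mem_product, mem_range, mem_univ, and_true]
        exact lt_trans (hmem p hp).1 (hmem p hp).2
    · -- injective on Γ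
      intro p hp q hq hpq
      simp only [hφ] at hpq
      split_ifs at hpq with h1 h2 h2
      · -- both nonempty
        obtain ⟨hv, -⟩ := Prod.mk.injEq .. ▸ hpq
        rw [Prod.mk.injEq] at hpq
        set v := (B p).max' h1 with hvdef
        have hvq : v = (B q).max' h2 := hpq.1
        obtain ⟨hpv, hpvlt⟩ := hBmem p v ((B p).max'_mem h1)
        obtain ⟨hqv, hqvlt⟩ := hBmem q v (hvq ▸ (B q).max'_mem h2)
        by_cases h12 : p.1 = q.1
        · -- same left endpoint: right endpoints must agree
          rcases lt_trichotomy p.2 q.2 with hlt | heq | hgt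
          · have : p.2 ∈ B q := hBmem' q p hp h12 hlt
            have hle : p.2 ≤ v := hvq ▸ (B q).le_max' _ this
            omega
          · exact Prod.ext h12 heq
          · have : q.2 ∈ B p := hBmem' p q hq h12.symm hgt
            have hle : q.2 ≤ v := (B p).le_max' _ this
            omega
        · exfalso
          rcases lt_or_gt_of_ne h12 with hlt | hgt
          · -- p.1 < q.1 : chord (p.1, v) crosses q
            have hne : (p.1, v) ≠ q := by
              intro he
              exact h12 (by rw [← he])
            have hc := (hnoncross _ hpv q hq hne).1
            have hq1v : q.1 < v := (hmem _ hqv).1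
            exact hc ⟨hlt, hq1v, hqvlt⟩
          · -- q.1 < p.1 : chord (q.1, v) crosses p
            have hne : (q.1, v) ≠ p := by
              intro he
              exact h12 (by rw [← he])
            have hc := (hnoncross _ hqv p hp hne).1
            have hp1v : p.1 < v := (hmem _ hpv).1
            exact hc ⟨hgt, hp1v, hpvlt⟩
      · exact absurd (congrArg Prod.snd hpq) (by simp)
      · exact absurd (congrArg Prod.snd hpq) (by simp)
      · -- both empty
        rw [Prod.mk.injEq] at hpq
        have h12 : p.1 = q.1 := hpq.1
        rcases lt_trichotomy p.2 q.2 with hlt | heq | hgt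
        · exact absurd ⟨p.2, hBmem' q p hp h12 hlt⟩ h2
        · exact Prod.ext h12 heq
        · exact absurd ⟨q.2, hBmem' p q hq h12.symm hgt⟩ h1
  simpa [Finset.card_product, mul_comm] using key

/-- Let the sides of a `2n`-gon be labeled alternately `X` and `Y`
(the `X` sides are those with even index `2i`, `i < n`).  If `Γ` is a collection
of pairwise disjoint (non-crossing), pairwise non-parallel diagonals — modeled as
ordered pairs `(a, b)` with `a < b < 2n` of distinct sides, no two chords strictly
interleaving — then some `X` side meets at most eight diagonals of `Γ`. -/
theorem polygon_some_X_side_meets_at_most_eight (n : ℕ) (hn : 1 ≤ n)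
    (Γ : Finset (ℕ × ℕ))
    (hmem : ∀ p ∈ Γ, p.1 < p.2 ∧ p.2 < 2 * n)
    (hnoncross : ∀ p ∈ Γ, ∀ q ∈ Γ, p ≠ q →
      ¬(p.1 < q.1 ∧ q.1 < p.2 ∧ p.2 < q.2) ∧
      ¬(q.1 < p.1 ∧ p.1 < q.2 ∧ q.2 < p.2)) :
    ∃ i : ℕ, i < n ∧
      (Γ.filter (fun p => p.1 = 2 * i ∨ p.2 = 2 * i)).card ≤ 8 := by
  classical
  by_contra hcon
  push_neg at hcon
  have hcard : Γ.card ≤ 4 * n := by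
    have := noncross_card_le (2 * n) Γ hmem hnoncross
    omega
  have hsum1 : 9 * n ≤
      ∑ i ∈ Finset.range n, (Γ.filter (fun p => p.1 = 2 * i ∨ p.2 = 2 * i)).card := by
    calc 9 * n = ∑ _i ∈ Finset.range n, 9 := by
          simp [mul_comm]
      _ ≤ _ := Finset.sum_le_sum (fun i hi => hcon i (Finset.mem_range.mp hi))
  have hsum2 : ∑ i ∈ Finset.range n,
      (Γ.filter (fun p => p.1 = 2 * i ∨ p.2 = 2 * i)).card ≤ 2 * Γ.card := by
    have hswap : ∑ i ∈ Finset.range n,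
        (Γ.filter (fun p => p.1 = 2 * i ∨ p.2 = 2 * i)).card
        = ∑ p ∈ Γ, ((Finset.range n).filter
            (fun i => p.1 = 2 * i ∨ p.2 = 2 * i)).card := by
      simp only [Finset.card_filter]
      exact Finset.sum_comm
    rw [hswap]
    calc ∑ p ∈ Γ, ((Finset.range n).filter
            (fun i => p.1 = 2 * i ∨ p.2 = 2 * i)).card
        ≤ ∑ _p ∈ Γ, 2 := by
          apply Finset.sum_le_sum
          intro p _
          have hsub : (Finset.range n).filter (fun i => p.1 = 2 * i ∨ p.2 = 2 * i)
              ⊆ {p.1 / 2, p.2 / 2} := by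
            intro i hi
            simp only [Finset.mem_filter] at hi
            simp only [Finset.mem_insert, Finset.mem_singleton]
            rcases hi.2 with h | h <;> omega
          calc _ ≤ ({p.1 / 2, p.2 / 2} : Finset ℕ).card := Finset.card_le_card hsub
            _ ≤ 2 := Finset.card_insert_le _ _ |>.trans (by simp)
      _ = 2 * Γ.card := by simp [mul_comm]
  omega
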